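/- Let T be a TBox (a finite set of inclusion and functionality assertions) and let I1, I2 be interpretations with disjoint support sets. Then I1 ⊎ I2 is a model of T if and only if I1 and I2 are both models of T. -/
import Mathlib


namespace DLLite

/-- The countably infinite domain of constants. -/
abbrev Δ : Type := ℕ
/-- Countably infinite set of concept names. -/
abbrev ConceptName : Type := ℕ
/-- Countably infinite set of role names. -/
abbrev RoleName : Type := ℕ

/-- An interpretation assigns a set of domain elements to each concept name
and a binary relation to each role name; constants are interpreted as themselves. -/
structure Interp where
  concept : ConceptName → Set Δ
  role : RoleName → Set (Δ × Δ)

/-- Basic roles: `P` or `P⁻`. -/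
inductive BasicRole where
  | pos (P : RoleName)
  | inv (P : RoleName)
deriving DecidableEq

def BasicRole.interp (R : BasicRole) (I : Interp) : Set (Δ × Δ) :=
  match R with
  | .pos P => I.role P
  | .inv P => {p | (p.2, p.1) ∈ I.role P}

/-- Basic concepts: `A` or `∃R`. -/
inductive BasicConcept where
  | atom (A : ConceptName)
  | ex (R : BasicRole)
deriving DecidableEq

def BasicConcept.interp (B : BasicConcept) (I : Interp) : Set Δ :=
  match B with
  | .atom A => I.concept A
  | .ex R => {o | ∃ o', (o, o') ∈ R.interp I}

/-- DL-Lite_FR assertions: (negative) concept/role inclusions, functionality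
assertions, and membership assertions. -/
inductive Assertion where
  | conceptIncl (B1 B2 : BasicConcept)
  | conceptDisj (B1 B2 : BasicConcept)
  | roleIncl (R1 R2 : BasicRole)
  | roleDisj (R1 R2 : BasicRole)
  | funct (R : BasicRole)
  | memberC (A : ConceptName) (a : Δ)
  | memberR (P : RoleName) (a b : Δ)
deriving DecidableEq

/-- Satisfaction of an assertion by an interpretation. -/
def Interp.sat (I : Interp) : Assertion → Prop
  | .conceptIncl B1 B2 => B1.interp I ⊆ B2.interp I
  | .conceptDisj B1 B2 => B1.interp I ∩ B2.interp I = ∅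
  | .roleIncl R1 R2 => R1.interp I ⊆ R2.interp I
  | .roleDisj R1 R2 => R1.interp I ∩ R2.interp I = ∅
  | .funct R => ∀ o o1 o2, (o, o1) ∈ R.interp I → (o, o2) ∈ R.interp I → o1 = o2
  | .memberC A a => a ∈ I.concept A
  | .memberR P a b => (a, b) ∈ I.role P

/-- TBox assertions: inclusion or functionality assertions. -/
def Assertion.isTBox : Assertion → Prop
  | .memberC _ _ => False
  | .memberR _ _ _ => False
  | _ => True

/-- Membership (ABox) assertions. -/
def Assertion.isMembership : Assertion → Prop
  | .memberC _ _ => True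
  | .memberR _ _ _ => True
  | _ => False

/-- The constants occurring in an assertion. -/
def Assertion.constants : Assertion → Set Δ
  | .memberC _ a => {a}
  | .memberR _ a b => {a, b}
  | _ => ∅

/-- A knowledge base: a finite set of assertions (TBox ∪ ABox). -/
abbrev KB := Finset Assertion

/-- The set of models of a KB. -/
def Mod (K : KB) : Set Interp := {I | ∀ a ∈ K, I.sat a}

/-- Interpretations falsifying at least one assertion of `K`. -/
def NonMod (K : KB) : Set Interp := {I | ∃ a ∈ K, ¬ I.sat a}

/-- The constants occurring in a KB. -/
def KB.constants (K : KB) : Set Δ := ⋃ a ∈ K, Assertion.constants a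

/-- Atoms: ground facts `A(o)` or `P(o,o')`. -/
inductive Atom where
  | c (A : ConceptName) (o : Δ)
  | r (P : RoleName) (o o' : Δ)
deriving DecidableEq

/-- The atom set of an interpretation. -/
def Interp.atoms (I : Interp) : Set Atom :=
  fun a => match a with
  | .c A o => o ∈ I.concept A
  | .r P o o' => (o, o') ∈ I.role P

/-- Concept or role names (symbols). -/
inductive SName where
  | c (A : ConceptName)
  | r (P : RoleName)
deriving DecidableEq

/-- Atom-based set distance: symmetric difference of atom sets. -/
def distASub (I J : Interp) : Set Atom := symmDiff I.atoms J.atoms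
/-- Atom-based cardinality distance. -/
noncomputable def distACard (I J : Interp) : ℕ∞ := (symmDiff I.atoms J.atoms).encard
/-- Symbol-based set distance: names interpreted differently. -/
def distSSub (I J : Interp) : Set SName :=
  fun n => match n with
  | .c A => I.concept A ≠ J.concept A
  | .r P => I.role P ≠ J.role P
/-- Symbol-based cardinality distance. -/
noncomputable def distSCard (I J : Interp) : ℕ∞ := (distSSub I J).encard

/-- Global expansion w.r.t. a distance. -/
def expGlobD {D : Type} [PartialOrder D] (dist : Interp → Interp → D)
    (M N : Set Interp) : Set Interp :=
  {J | J ∈ N ∧ ∃ I ∈ M, ∀ I' ∈ M, ∀ J' ∈ N, ¬ dist I' J' < dist I J}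

/-- Local expansion w.r.t. a distance. -/
def expLocD {D : Type} [PartialOrder D] (dist : Interp → Interp → D)
    (M N : Set Interp) : Set Interp :=
  {J | J ∈ N ∧ ∃ I ∈ M, ∀ J' ∈ N, ¬ dist I J' < dist I J}

inductive LocKind | glob | loc
inductive MeasKind | atoms | symbols
inductive OrdKind | subset | card

/-- The expansion operator on sets of interpretations for each of the
eight model-based semantics `X^y_z`. -/
def expansionSet : LocKind → MeasKind → OrdKind → Set Interp → Set Interp → Set Interp
  | .glob, .atoms, .subset => expGlobD distASub
  | .glob, .atoms, .card => expGlobD distACard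
  | .glob, .symbols, .subset => expGlobD distSSub
  | .glob, .symbols, .card => expGlobD distSCard
  | .loc, .atoms, .subset => expLocD distASub
  | .loc, .atoms, .card => expLocD distACard
  | .loc, .symbols, .subset => expLocD distSSub
  | .loc, .symbols, .card => expLocD distSCard

/-- KB expansion `K ⊕ N` under semantics `X^y_z`. -/
def expandKB (X : LocKind) (y : MeasKind) (z : OrdKind) (K N : KB) : Set Interp :=
  expansionSet X y z (Mod K) (Mod N)

/-- KB contraction `K ⊖ N` under semantics `X^y_z`. -/
def contractKB (X : LocKind) (y : MeasKind) (z : OrdKind) (K N : KB) : Set Interp :=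
  Mod K ∪ expansionSet X y z (Mod K) (NonMod N)

/-- Union of two interpretations. -/
def Interp.union (I1 I2 : Interp) : Interp :=
  ⟨fun A => I1.concept A ∪ I2.concept A, fun P => I1.role P ∪ I2.role P⟩

/-- The support set of an interpretation. -/
def Interp.support (I : Interp) : Set Δ :=
  (⋃ A, I.concept A) ∪ (⋃ P, {o | ∃ o', (o, o') ∈ I.role P ∨ (o', o) ∈ I.role P})

/-- The image `I^f` of an interpretation under an (injective) map `f`. -/
def Interp.image (I : Interp) (f : Δ → Δ) : Interp :=
  ⟨fun A => f '' I.concept A, fun P => (fun p => (f p.1, f p.2)) '' I.role P⟩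

/-- `h` is a homomorphism from `I` to `J`. -/
def IsHom (h : Δ → Δ) (I J : Interp) : Prop :=
  (∀ A, h '' I.concept A ⊆ J.concept A) ∧
  (∀ P o o', (o, o') ∈ I.role P → (h o, h o') ∈ J.role P)

end DLLite

namespace DLLite

lemma role_mem_support {I : Interp} {P : RoleName} {o o' : Δ}
    (h : (o, o') ∈ I.role P) : o ∈ I.support ∧ o' ∈ I.support := by
  exact ⟨Or.inr (Set.mem_iUnion.2 ⟨P, ⟨o', Or.inl h⟩⟩),
    Or.inr (Set.mem_iUnion.2 ⟨P, ⟨o, Or.inr h⟩⟩)⟩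

lemma roleInterp_mem_support {I : Interp} {R : BasicRole} {p : Δ × Δ}
    (h : p ∈ R.interp I) : p.1 ∈ I.support ∧ p.2 ∈ I.support := by
  cases R with
  | pos P => exact role_mem_support h
  | inv P => exact (role_mem_support h).symm

lemma conceptInterp_mem_support {I : Interp} {B : BasicConcept} {x : Δ}
    (h : x ∈ B.interp I) : x ∈ I.support := by
  cases B with
  | atom A => exact Or.inl (Set.mem_iUnion.2 ⟨A, h⟩)
  | ex R =>
    obtain ⟨o', ho'⟩ := h
    exact (roleInterp_mem_support ho').1

lemma roleInterp_union (I1 I2 : Interp) (R : BasicRole) :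
    R.interp (I1.union I2) = R.interp I1 ∪ R.interp I2 := by
  cases R <;> rfl

lemma conceptInterp_union (I1 I2 : Interp) (B : BasicConcept) :
    B.interp (I1.union I2) = B.interp I1 ∪ B.interp I2 := by
  cases B with
  | atom A => rfl
  | ex R =>
    ext x
    simp only [BasicConcept.interp, roleInterp_union, Set.mem_union,
      Set.mem_setOf_eq]
    constructor
    · rintro ⟨o', h | h⟩
      · exact Or.inl ⟨o', h⟩
      · exact Or.inr ⟨o', h⟩
    · rintro (⟨o', h⟩ | ⟨o', h⟩) <;> exact ⟨o', by tauto⟩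

/-- For a TBox `T` and interpretations with disjoint support sets:
`I1 ⊎ I2` is a model of `T` iff both `I1` and `I2` are models of `T`. -/
theorem disjoint_union_model_tbox (T : KB) (hT : ∀ a ∈ T, a.isTBox)
    (I1 I2 : Interp) (hdisj : Disjoint I1.support I2.support) :
    I1.union I2 ∈ Mod T ↔ I1 ∈ Mod T ∧ I2 ∈ Mod T := by
  have hdisj' : ∀ x : Δ, x ∈ I1.support → x ∈ I2.support → False := by
    intro x h1 h2
    exact Set.disjoint_left.mp hdisj h1 h2
  constructor
  · intro hU
    have key : ∀ a ∈ T, I1.sat a ∧ I2.sat a := by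
      intro a ha
      have hsat := hU a ha
      have htb := hT a ha
      cases a with
      | conceptIncl B1 B2 =>
        simp only [Interp.sat, conceptInterp_union] at hsat ⊢
        constructor
        · intro x hx
          rcases hsat (Or.inl hx) with h | h
          · exact h
          · exact absurd (conceptInterp_mem_support h)
              (fun h2 => hdisj' x (conceptInterp_mem_support hx) h2)
        · intro x hx
          rcases hsat (Or.inr hx) with h | h
          · exact absurd (conceptInterp_mem_support h)
              (fun h1 => hdisj' x h1 (conceptInterp_mem_support hx))
          · exact h
      | conceptDisj B1 B2 =>
        simp only [Interp.sat, conceptInterp_union, Set.eq_empty_iff_forall_notMem,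
          Set.mem_inter_iff, Set.mem_union] at hsat ⊢
        constructor
        · exact fun x ⟨h1, h2⟩ => hsat x ⟨Or.inl h1, Or.inl h2⟩
        · exact fun x ⟨h1, h2⟩ => hsat x ⟨Or.inr h1, Or.inr h2⟩
      | roleIncl R1 R2 =>
        simp only [Interp.sat, roleInterp_union] at hsat ⊢
        constructor
        · intro p hp
          rcases hsat (Or.inl hp) with h | h
          · exact h
          · exact absurd ((roleInterp_mem_support h).1)
              (fun h2 => hdisj' p.1 (roleInterp_mem_support hp).1 h2)
        · intro p hp
          rcases hsat (Or.inr hp) with h | h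
          · exact absurd ((roleInterp_mem_support h).1)
              (fun h1 => hdisj' p.1 h1 (roleInterp_mem_support hp).1)
          · exact h
      | roleDisj R1 R2 =>
        simp only [Interp.sat, roleInterp_union, Set.eq_empty_iff_forall_notMem,
          Set.mem_inter_iff, Set.mem_union] at hsat ⊢
        constructor
        · exact fun p ⟨h1, h2⟩ => hsat p ⟨Or.inl h1, Or.inl h2⟩
        · exact fun p ⟨h1, h2⟩ => hsat p ⟨Or.inr h1, Or.inr h2⟩
      | funct R =>
        simp only [Interp.sat, roleInterp_union] at hsat ⊢
        constructor
        · intro o o1 o2 h1 h2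
          exact hsat o o1 o2 (Set.mem_union_left _ h1) (Set.mem_union_left _ h2)
        · intro o o1 o2 h1 h2
          exact hsat o o1 o2 (Set.mem_union_right _ h1) (Set.mem_union_right _ h2)
      | memberC A x => exact absurd htb (by simp [Assertion.isTBox])
      | memberR P a b => exact absurd htb (by simp [Assertion.isTBox])
    exact ⟨fun a ha => (key a ha).1, fun a ha => (key a ha).2⟩
  · rintro ⟨h1, h2⟩ a ha
    have s1 := h1 a ha
    have s2 := h2 a ha
    cases a with
    | conceptIncl B1 B2 =>
      simp only [Interp.sat, conceptInterp_union] at s1 s2 ⊢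
      exact Set.union_subset_union s1 s2
    | conceptDisj B1 B2 =>
      simp only [Interp.sat, conceptInterp_union, Set.eq_empty_iff_forall_notMem,
        Set.mem_inter_iff, Set.mem_union] at s1 s2 ⊢
      rintro x ⟨hx1 | hx1, hx2 | hx2⟩
      · exact s1 x ⟨hx1, hx2⟩
      · exact hdisj' x (conceptInterp_mem_support hx1) (conceptInterp_mem_support hx2)
      · exact hdisj' x (conceptInterp_mem_support hx2) (conceptInterp_mem_support hx1)
      · exact s2 x ⟨hx1, hx2⟩
    | roleIncl R1 R2 =>
      simp only [Interp.sat, roleInterp_union] at s1 s2 ⊢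
      exact Set.union_subset_union s1 s2
    | roleDisj R1 R2 =>
      simp only [Interp.sat, roleInterp_union, Set.eq_empty_iff_forall_notMem,
        Set.mem_inter_iff, Set.mem_union] at s1 s2 ⊢
      rintro p ⟨hp1 | hp1, hp2 | hp2⟩
      · exact s1 p ⟨hp1, hp2⟩
      · exact hdisj' p.1 (roleInterp_mem_support hp1).1 (roleInterp_mem_support hp2).1
      · exact hdisj' p.1 (roleInterp_mem_support hp2).1 (roleInterp_mem_support hp1).1
      · exact s2 p ⟨hp1, hp2⟩
    | funct R =>
      simp only [Interp.sat, roleInterp_union] at s1 s2 ⊢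
      rintro o o1 o2 (h1 | h1) (h2 | h2)
      · exact s1 o o1 o2 h1 h2
      · exact absurd (roleInterp_mem_support h2).1
          (fun h => hdisj' o (roleInterp_mem_support h1).1 h)
      · exact absurd (roleInterp_mem_support h1).1
          (fun h => hdisj' o (roleInterp_mem_support h2).1 h)
      · exact s2 o o1 o2 h1 h2
    | memberC A x => exact absurd (hT _ ha) (by simp [Assertion.isTBox])
    | memberR P a b => exact absurd (hT _ ha) (by simp [Assertion.isTBox])

end DLLite
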